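/- Let n ∈ ℕ, let W = {w_1, …, w_n} and M = {m_1, …, m_n} be disjoint sets with designated woman w = w_1, and let w' and m' be two further participants distinct from all of these. Given a profile P_W of partial preference lists for W over M and a profile P_M for M over W, define partial preference lists on W ∪ {w'} over M ∪ {m'}: the list of w is her list in P_W followed by m'; the list of every other woman of W is unchanged; the list of w' is empty; the list of every man of M is unchanged (w' absent); the list of m' consists solely of w. Then w is single in some marriage between W and M that is stable with respect to P_W and P_M if and only if m' is married in every marriage between W ∪ {w'} and M ∪ {m'} that is stable with respect to the constructed preference lists. -/

import Mathlib

/-- `listPref l a b`: in the (possibly partial) preference list `l`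
(most-preferred first), `a` is preferred over `b`: `a` is on the list, and
either `b` is not on the list or `a` precedes `b` on it. -/
def listPref {α : Type} [DecidableEq α] (l : List α) (a b : α) : Prop :=
  a ∈ l ∧ (b ∈ l → l.idxOf a < l.idxOf b)

/-- A marriage between (a subset of) the women `Fin nw` and (a subset of) the
men `Fin nm`: `μ i = some j` means woman `i` is married to man `j`, and
`μ i = none` means woman `i` is single; no two women share a husband. -/
def IsMarriage {nw nm : ℕ} (μ : Fin nw → Option (Fin nm)) : Prop :=
  ∀ i i' j, μ i = some j → μ i' = some j → i = i'

/-- Stability of a marriage `μ` with respect to (possibly partial) preference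
lists `wL` (women's lists of men) and `mL` (men's lists of women): every married
participant is married to someone on their own list, and there is no blocking
pair, i.e. no pair `(i, j)`, with `j` on `i`'s list and `i` on `j`'s list, such
that woman `i` is single or prefers `j` over her spouse, and man `j` is single
or prefers `i` over his spouse. -/
def StableL {nw nm : ℕ} (wL : Fin nw → List (Fin nm)) (mL : Fin nm → List (Fin nw))
    (μ : Fin nw → Option (Fin nm)) : Prop :=
  (∀ i j, μ i = some j → j ∈ wL i ∧ i ∈ mL j) ∧
  ¬∃ (i : Fin nw) (j : Fin nm),
      j ∈ wL i ∧ i ∈ mL j ∧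
      (∀ j', μ i = some j' → listPref (wL i) j j') ∧
      (∀ i', μ i' = some j → listPref (mL j) i i')

/-- Extension of the women's profile `wL` on `Fin n` to `Fin (n + 1)`: woman
`w = w_1` (index `0`, requiring `0 < n`) gets her original list followed by `m'`
(index `n`, i.e. `Fin.last n`); every other original woman keeps her list
unchanged; the extra woman `w'` (index `n`) has an empty list. -/
def addWL (n : ℕ) (wL : Fin n → List (Fin n)) : Fin (n + 1) → List (Fin (n + 1)) :=
  fun i =>
    if h : i.val < n then
      if i.val = 0 then ((wL ⟨i.val, h⟩).map Fin.castSucc) ++ [Fin.last n]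
      else (wL ⟨i.val, h⟩).map Fin.castSucc
    else []

/-- Extension of the men's profile `mL` on `Fin n` to `Fin (n + 1)`: every
original man keeps his list unchanged (`w'` absent); the extra man `m'`
(index `n`) lists solely `w = w_1` (index `0`). -/
def addML (n : ℕ) (mL : Fin n → List (Fin n)) : Fin (n + 1) → List (Fin (n + 1)) :=
  fun j =>
    if h : j.val < n then (mL ⟨j.val, h⟩).map Fin.castSucc
    else [(0 : Fin (n + 1))]

section Helpers
variable {α : Type} [DecidableEq α]

theorem indexOf_map_inj {β : Type} [DecidableEq β] {f : α → β} (hf : Function.Injective f)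
    (l : List α) (a : α) : (l.map f).idxOf (f a) = l.idxOf a := by
  induction l with
  | nil => rfl
  | cons b t ih =>
    by_cases h : a = b
    · subst h; simp
    · have hfb : f a ≠ f b := fun e => h (hf e)
      rw [List.map_cons, List.idxOf_cons_ne _ (Ne.symm hfb), List.idxOf_cons_ne _ (Ne.symm h), ih]

theorem indexOf_lt_of_sublist {l₁ l₂ : List α} (h : l₁.Sublist l₂) (nd : l₂.Nodup) :
    ∀ {a b : α}, a ∈ l₁ → b ∈ l₁ → l₁.idxOf a < l₁.idxOf b → l₂.idxOf a < l₂.idxOf b := by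
  induction h with
  | slnil => intro a b ha; simp at ha
  | @cons l₁ l₂ x h ih =>
    intro a b ha hb hlt
    have hx : x ∉ l₂ := (List.nodup_cons.1 nd).1
    have hax : a ≠ x := fun e => hx (e ▸ h.subset ha)
    have hbx : b ≠ x := fun e => hx (e ▸ h.subset hb)
    have := ih (List.nodup_cons.1 nd).2 ha hb hlt
    rw [List.idxOf_cons_ne _ (Ne.symm hax), List.idxOf_cons_ne _ (Ne.symm hbx)]
    omega
  | @cons_cons l₁ l₂ x h ih =>
    intro a b ha hb hlt
    by_cases hax : a = x
    · subst hax
      have hbx : b ≠ a := by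
        rintro rfl
        exact absurd hlt (lt_irrefl _)
      rw [List.idxOf_cons_self, List.idxOf_cons_ne _ (Ne.symm hbx)]
      omega
    · have hbx : b ≠ x := by
        rintro rfl
        rw [List.idxOf_cons_self, List.idxOf_cons_ne _ (Ne.symm hax)] at hlt
        omega
      have ha' : a ∈ l₁ := (List.mem_cons.1 ha).resolve_left hax
      have hb' : b ∈ l₁ := (List.mem_cons.1 hb).resolve_left hbx
      rw [List.idxOf_cons_ne _ (Ne.symm hax), List.idxOf_cons_ne _ (Ne.symm hbx)] at hlt ⊢
      have := ih (List.nodup_cons.1 nd).2 ha' hb' (by omega)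
      omega

theorem indexOf_lt_iff_of_sublist {l₁ l₂ : List α} (h : l₁.Sublist l₂) (nd : l₂.Nodup)
    {a b : α} (ha : a ∈ l₁) (hb : b ∈ l₁) :
    l₁.idxOf a < l₁.idxOf b ↔ l₂.idxOf a < l₂.idxOf b := by
  constructor
  · exact indexOf_lt_of_sublist h nd ha hb
  · intro h2
    rcases lt_trichotomy (l₁.idxOf a) (l₁.idxOf b) with h1 | h1 | h1
    · exact h1
    · exact absurd ((List.idxOf_inj ha).1 h1 ▸ h2) (lt_irrefl _)
    · exact absurd (indexOf_lt_of_sublist h nd hb ha h1) (by omega)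

theorem listPref_restrict {l₁ l₂ : List α} (h : l₁.Sublist l₂) (nd : l₂.Nodup)
    {a b : α} (ha : a ∈ l₁) (hb : b ∈ l₁) (hp : listPref l₂ a b) : listPref l₁ a b :=
  ⟨ha, fun _ => (indexOf_lt_iff_of_sublist h nd ha hb).2 (hp.2 (h.subset hb))⟩

end Helpers

section Exist


def Consistent {nw nm : ℕ} (wL : Fin nw → List (Fin nm)) (mL : Fin nm → List (Fin nw)) : Prop :=
  ∀ i j, j ∈ wL i ↔ i ∈ mL j

theorem stable_of_heads {nw nm : ℕ} (wL : Fin nw → List (Fin nm)) (mL : Fin nm → List (Fin nw))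
    (hcons : Consistent wL mL)
    (huniq : ∀ i i' j, (wL i).head? = some j → (wL i').head? = some j → i = i') :
    ∃ μ, IsMarriage μ ∧ StableL wL mL μ := by
  refine ⟨fun i => (wL i).head?, fun i i' j h h' => huniq i i' j h h', ?_, ?_⟩
  · intro i j h
    have hj : j ∈ wL i := List.mem_of_mem_head? h
    exact ⟨hj, (hcons i j).1 hj⟩
  · rintro ⟨i, j, hj, hi, hwc, hmc⟩
    rcases hl : wL i with _ | ⟨j0, t⟩
    · rw [hl] at hj; simp at hj
    · have h0 := hwc j0 (by show (wL i).head? = some j0; rw [hl]; rfl)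
      rw [hl] at h0
      have := h0.2 (by simp)
      rw [List.idxOf_cons_self] at this
      omega

theorem exists_stable_consistent :
    ∀ (N : ℕ) {nw nm : ℕ} (wL : Fin nw → List (Fin nm)) (mL : Fin nm → List (Fin nw)),
    (∑ i, (wL i).length) ≤ N → (∀ i, (wL i).Nodup) → (∀ j, (mL j).Nodup) → Consistent wL mL →
    ∃ μ, IsMarriage μ ∧ StableL wL mL μ := by
  intro N
  induction N with
  | zero =>
    intro nw nm wL mL hsum hw hm hcons
    apply stable_of_heads wL mL hcons
    intro i i' j h h'
    have : (wL i).length = 0 := by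
      have h1 : (wL i).length ≤ ∑ k, (wL k).length :=
        Finset.single_le_sum (f := fun k => (wL k).length) (fun k _ => Nat.zero_le _) (Finset.mem_univ i)
      omega
    rw [List.length_eq_zero_iff.1 this] at h
    cases h
  | succ N ih =>
    intro nw nm wL mL hsum hw hm hcons
    by_cases hcase : ∃ i i' j, i ≠ i' ∧ (wL i).head? = some j ∧ (wL i').head? = some j
    · obtain ⟨i, i', j, hne, hh, hh'⟩ := hcase
      have key : ∀ a b : Fin nw, a ≠ b → (wL a).head? = some j → (wL b).head? = some j →
          (mL j).idxOf a < (mL j).idxOf b → ∃ μ, IsMarriage μ ∧ StableL wL mL μ := by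
        intro a b hab hha hhb hlt
        have hja : j ∈ wL a := List.mem_of_mem_head? hha
        have hjb : j ∈ wL b := List.mem_of_mem_head? hhb
        have ham : a ∈ mL j := (hcons a j).1 hja
        have hbm : b ∈ mL j := (hcons b j).1 hjb
        set wL' : Fin nw → List (Fin nm) := Function.update wL b ((wL b).erase j) with hwL'
        set mL' : Fin nm → List (Fin nw) := Function.update mL j ((mL j).erase b) with hmL'
        have hsubW : ∀ c, (wL' c).Sublist (wL c) := by
          intro c
          by_cases hc : c = b
          · subst hc; rw [hwL', Function.update_self]; exact List.erase_sublist
          · rw [hwL', Function.update_of_ne hc]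
        have hsubM : ∀ d, (mL' d).Sublist (mL d) := by
          intro d
          by_cases hd : d = j
          · subst hd; rw [hmL', Function.update_self]; exact List.erase_sublist
          · rw [hmL', Function.update_of_ne hd]
        have hw' : ∀ c, (wL' c).Nodup := fun c => (hsubW c).nodup (hw c)
        have hm' : ∀ d, (mL' d).Nodup := fun d => (hsubM d).nodup (hm d)
        have hmemW : ∀ c d, d ∈ wL' c ↔ (¬(c = b ∧ d = j) ∧ d ∈ wL c) := by
          intro c d
          by_cases hc : c = b
          · subst hc
            rw [hwL', Function.update_self, (hw _).mem_erase_iff]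
            constructor
            · rintro ⟨h1, h2⟩; exact ⟨fun h => h1 h.2, h2⟩
            · rintro ⟨h1, h2⟩; exact ⟨fun h => h1 ⟨rfl, h⟩, h2⟩
          · rw [hwL', Function.update_of_ne hc]
            constructor
            · intro h; exact ⟨fun h' => hc h'.1, h⟩
            · exact And.right
        have hmemM : ∀ c d, c ∈ mL' d ↔ (¬(c = b ∧ d = j) ∧ c ∈ mL d) := by
          intro c d
          by_cases hd : d = j
          · subst hd
            rw [hmL', Function.update_self, (hm _).mem_erase_iff]
            constructor
            · rintro ⟨h1, h2⟩; exact ⟨fun h => h1 h.1, h2⟩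
            · rintro ⟨h1, h2⟩; exact ⟨fun h => h1 ⟨h, rfl⟩, h2⟩
          · rw [hmL', Function.update_of_ne hd]
            constructor
            · intro h; exact ⟨fun h' => hd h'.2, h⟩
            · exact And.right
        have hcons' : Consistent wL' mL' := by
          intro c d
          rw [hmemW, hmemM, hcons c d]
        have hsum' : (∑ k, (wL' k).length) ≤ N := by
          have hlt2 : (∑ k, (wL' k).length) < ∑ k, (wL k).length := by
            apply Finset.sum_lt_sum
            · intro c _
              exact (hsubW c).length_le
            · refine ⟨b, Finset.mem_univ b, ?_⟩
              rw [hwL', Function.update_self, List.length_erase_of_mem hjb]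
              have := List.length_pos_iff.2 (List.ne_nil_of_mem hjb)
              omega
          omega
        obtain ⟨μ, hμm, hμs⟩ := ih wL' mL' hsum' hw' hm' hcons'
        refine ⟨μ, hμm, ?_, ?_⟩
        · intro c d h
          obtain ⟨h1, h2⟩ := hμs.1 c d h
          exact ⟨(hsubW c).subset h1, (hsubM d).subset h2⟩
        · rintro ⟨c, d, hd, hc, hwc, hmc⟩
          apply hμs.2
          by_cases hbd : c = b ∧ d = j
          · obtain ⟨rfl, rfl⟩ := hbd
            -- blocking pair (a, d) for μ w.r.t. primed lists
            have haj' : d ∈ wL' a := (hmemW a d).2 ⟨fun h => hab h.1, hja⟩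
            have haM' : a ∈ mL' d := (hmemM a d).2 ⟨fun h => hab h.1, ham⟩
            have hμaj : μ a ≠ some d := by
              intro h
              have := (hmc a h).2 ham
              omega
            obtain ⟨ta, hta⟩ : ∃ ta, wL a = d :: ta := by
              rcases hl : wL a with _ | ⟨x, ta⟩
              · rw [hl] at hha; cases hha
              · rw [hl] at hha
                simp only [List.head?_cons, Option.some.injEq] at hha
                exact ⟨ta, by rw [hha]⟩
            refine ⟨a, d, haj', haM', ?_, ?_⟩
            · intro j' hj'
              have hj'mem : j' ∈ wL' a := (hμs.1 a j' hj').1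
              have hj'ne : j' ≠ d := fun h => hμaj (h ▸ hj')
              refine ⟨haj', fun _ => ?_⟩
              have hwla : wL' a = wL a := by
                rw [hwL', Function.update_of_ne hab]
              rw [hwla, hta, List.idxOf_cons_self, List.idxOf_cons_ne _ (Ne.symm hj'ne)]
              omega
            · intro c' hc'
              have hc'mem : c' ∈ mL' d := (hμs.1 c' d hc').2
              have hcc' := (hmc c' hc').2 (((hmemM c' d).1 hc'mem).2)
              exact ⟨haM', fun _ =>
                (indexOf_lt_iff_of_sublist (hsubM d) (hm d) haM' hc'mem).2 (by omega)⟩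
          · have hd' : d ∈ wL' c := (hmemW c d).2 ⟨hbd, hd⟩
            have hc' : c ∈ mL' d := (hmemM c d).2 ⟨hbd, hc⟩
            refine ⟨c, d, hd', hc', ?_, ?_⟩
            · intro j' hj'
              exact listPref_restrict (hsubW c) (hw c) hd' (hμs.1 c j' hj').1 (hwc j' hj')
            · intro c' hc''
              exact listPref_restrict (hsubM d) (hm d) hc' (hμs.1 c' d hc'').2 (hmc c' hc'')
      have hia : i ∈ mL j := (hcons i j).1 (List.mem_of_mem_head? hh)
      have hib : i' ∈ mL j := (hcons i' j).1 (List.mem_of_mem_head? hh')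
      rcases lt_trichotomy ((mL j).idxOf i) ((mL j).idxOf i') with h | h | h
      · exact key i i' hne hh hh' h
      · exact absurd ((List.idxOf_inj hia).1 h) hne
      · exact key i' i hne.symm hh' hh h
    · apply stable_of_heads wL mL hcons
      intro a a' j' h h'
      by_contra hne
      exact hcase ⟨a, a', j', hne, h, h'⟩

end Exist

theorem exists_stable {nw nm : ℕ} (wL : Fin nw → List (Fin nm)) (mL : Fin nm → List (Fin nw))
    (hw : ∀ i, (wL i).Nodup) (hm : ∀ j, (mL j).Nodup) :
    ∃ μ, IsMarriage μ ∧ StableL wL mL μ := by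
  set wL' : Fin nw → List (Fin nm) := fun i => (wL i).filter (fun j => decide (i ∈ mL j)) with hwL'
  set mL' : Fin nm → List (Fin nw) := fun j => (mL j).filter (fun i => decide (j ∈ wL i)) with hmL'
  have hsubW : ∀ i, (wL' i).Sublist (wL i) := fun i => List.filter_sublist
  have hsubM : ∀ j, (mL' j).Sublist (mL j) := fun j => List.filter_sublist
  have hmemW : ∀ i j, j ∈ wL' i ↔ (j ∈ wL i ∧ i ∈ mL j) := by
    intro i j; rw [hwL']; simp [List.mem_filter]
  have hmemM : ∀ i j, i ∈ mL' j ↔ (j ∈ wL i ∧ i ∈ mL j) := by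
    intro i j; rw [hmL']; simp [List.mem_filter]; tauto
  have hcons : Consistent wL' mL' := by
    intro i j; rw [hmemW, hmemM]
  obtain ⟨μ, hμm, hμs⟩ := exists_stable_consistent (∑ i, (wL' i).length) wL' mL' le_rfl
    (fun i => (hsubW i).nodup (hw i)) (fun j => (hsubM j).nodup (hm j)) hcons
  refine ⟨μ, hμm, ?_, ?_⟩
  · intro i j h
    obtain ⟨h1, h2⟩ := hμs.1 i j h
    exact ⟨(hsubW i).subset h1, (hsubM j).subset h2⟩
  · rintro ⟨i, j, hj, hi, hwc, hmc⟩
    apply hμs.2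
    have hj' : j ∈ wL' i := (hmemW i j).2 ⟨hj, hi⟩
    have hi' : i ∈ mL' j := (hmemM i j).2 ⟨hj, hi⟩
    refine ⟨i, j, hj', hi', ?_, ?_⟩
    · intro j' h
      exact listPref_restrict (hsubW i) (hw i) hj' (hμs.1 i j' h).1 (hwc j' h)
    · intro i' h
      exact listPref_restrict (hsubM j) (hm j) hi' (hμs.1 i' j h).2 (hmc i' h)

theorem lone_wolf {nw nm : ℕ} {wL : Fin nw → List (Fin nm)} {mL : Fin nm → List (Fin nw)}
    (hw : ∀ i, (wL i).Nodup) (hm : ∀ j, (mL j).Nodup)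
    {μ ν : Fin nw → Option (Fin nm)}
    (hμ : IsMarriage μ) (hμs : StableL wL mL μ) (hν : IsMarriage ν) (hνs : StableL wL mL ν)
    {i : Fin nw} (h1 : μ i = none) : ν i = none := by
  by_contra h2
  obtain ⟨m1, hm1⟩ : ∃ m1, ν i = some m1 := by
    rcases h : ν i with _ | m1
    · exact absurd h h2
    · exact ⟨m1, rfl⟩
  set Inv : Fin nw × Fin nm → Prop := fun p =>
    μ p.1 = some p.2 ∧ ∃ q, ν q = some p.2 ∧ (mL p.2).idxOf p.1 < (mL p.2).idxOf q with hInv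
  -- a step of the alternating-path argument
  have step : ∀ p, Inv p → ∃ p', Inv p' ∧ ν p.1 = some p'.2 := by
    rintro ⟨wk, mk⟩ hp
    obtain ⟨hμwk, q, hq, hqlt⟩ := hp
    dsimp only at hμwk hq hqlt ⊢
    obtain ⟨hmkw, hwkm⟩ := hμs.1 wk mk hμwk
    have hman : ∀ i', ν i' = some mk → listPref (mL mk) wk i' := by
      intro i' hi'
      have : i' = q := hν i' q mk hi' hq
      subst this
      exact ⟨hwkm, fun _ => hqlt⟩
    have hwfail : ¬ ∀ j', ν wk = some j' → listPref (wL wk) mk j' := by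
      intro hall
      exact hνs.2 ⟨wk, mk, hmkw, hwkm, hall, hman⟩
    push_neg at hwfail
    obtain ⟨j', hνwk, hnp⟩ := hwfail
    have hj'w : j' ∈ wL wk := (hνs.1 wk j' hνwk).1
    have hwkj' : wk ∈ mL j' := (hνs.1 wk j' hνwk).2
    have h3 : ¬ ((wL wk).idxOf mk < (wL wk).idxOf j') := fun hlt => hnp ⟨hmkw, fun _ => hlt⟩
    have hj'ne : j' ≠ mk := by
      rintro rfl
      have : wk = q := hν wk q j' hνwk hq
      subst this
      omega
    have h4 : (wL wk).idxOf j' < (wL wk).idxOf mk := by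
      have : ¬ ((wL wk).idxOf j' = (wL wk).idxOf mk) :=
        fun he => hj'ne ((List.idxOf_inj hj'w).1 he)
      omega
    have hwc : ∀ j'', μ wk = some j'' → listPref (wL wk) j' j'' := by
      intro j'' hj''
      rw [hμwk] at hj''
      injection hj'' with hj''
      subst hj''
      exact ⟨hj'w, fun _ => h4⟩
    have hmfail : ¬ ∀ i', μ i' = some j' → listPref (mL j') wk i' := by
      intro hall
      exact hμs.2 ⟨wk, j', hj'w, hwkj', hwc, hall⟩
    push_neg at hmfail
    obtain ⟨w', hw', hnp2⟩ := hmfail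
    have hw'm : w' ∈ mL j' := (hμs.1 w' j' hw').2
    have h5 : ¬ ((mL j').idxOf wk < (mL j').idxOf w') := fun hlt => hnp2 ⟨hwkj', fun _ => hlt⟩
    have hw'ne : w' ≠ wk := by
      rintro rfl
      rw [hμwk] at hw'
      injection hw' with he
      exact hj'ne he.symm
    have h6 : (mL j').idxOf w' < (mL j').idxOf wk := by
      have : ¬ ((mL j').idxOf w' = (mL j').idxOf wk) :=
        fun he => hw'ne ((List.idxOf_inj hw'm).1 he)
      omega
    exact ⟨(w', j'), ⟨hw', wk, hνwk, h6⟩, hνwk⟩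
  -- base pair
  obtain ⟨hm1w, him⟩ := hνs.1 i m1 hm1
  have hwc0 : ∀ j', μ i = some j' → listPref (wL i) m1 j' := by
    intro j' h
    rw [h1] at h
    cases h
  have hmfail0 : ¬ ∀ i', μ i' = some m1 → listPref (mL m1) i i' := by
    intro hall
    exact hμs.2 ⟨i, m1, hm1w, him, hwc0, hall⟩
  push_neg at hmfail0
  obtain ⟨w0, hw0, hnp0⟩ := hmfail0
  have hw0m : w0 ∈ mL m1 := (hμs.1 w0 m1 hw0).2
  have h50 : ¬ ((mL m1).idxOf i < (mL m1).idxOf w0) := fun hlt => hnp0 ⟨him, fun _ => hlt⟩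
  have hw0ne : w0 ≠ i := by
    rintro rfl
    rw [h1] at hw0
    cases hw0
  have h60 : (mL m1).idxOf w0 < (mL m1).idxOf i := by
    have : ¬ ((mL m1).idxOf w0 = (mL m1).idxOf i) :=
      fun he => hw0ne ((List.idxOf_inj hw0m).1 he)
    omega
  have hp0 : Inv (w0, m1) := ⟨hw0, i, hm1, h60⟩
  have step' : ∀ p : {p // Inv p}, ∃ p' : {p // Inv p}, ν p.1.1 = some p'.1.2 := by
    rintro ⟨p, hp⟩
    obtain ⟨p', hp', hl⟩ := step p hp
    exact ⟨⟨p', hp'⟩, hl⟩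
  choose F hF using step'
  set seq : ℕ → {p // Inv p} := fun k => F^[k] ⟨(w0, m1), hp0⟩ with hseq
  have hlink : ∀ k, ν (seq k).1.1 = some (seq (k+1)).1.2 := by
    intro k
    have he : seq (k+1) = F (seq k) := by
      rw [hseq]
      exact Function.iterate_succ_apply' F k _
    rw [he]
    exact hF (seq k)
  have hlink0 : ν i = some (seq 0).1.2 := by
    rw [hseq]
    exact hm1
  have hμseq : ∀ k, μ (seq k).1.1 = some (seq k).1.2 := fun k => (seq k).2.1
  have key : ∀ b a, (seq a).1.1 = (seq (a + (b + 1))).1.1 → False := by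
    intro b a
    induction a with
    | zero =>
      intro h
      rw [Nat.zero_add] at h
      have e1 := hμseq 0
      rw [h] at e1
      have e2 := e1.symm.trans (hμseq (b + 1))
      injection e2 with e2
      have e3 := hlink b
      rw [← e2] at e3
      have hieq : i = (seq b).1.1 := hν i (seq b).1.1 (seq 0).1.2 hlink0 e3
      have e4 : μ i = some (seq b).1.2 := by rw [hieq]; exact hμseq b
      rw [h1] at e4
      cases e4
    | succ a iha =>
      intro h
      have e0 : a + 1 + (b + 1) = (a + (b + 1)) + 1 := by omega
      rw [e0] at h
      have e1 := hμseq (a + 1)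
      rw [h] at e1
      have e2 := e1.symm.trans (hμseq ((a + (b + 1)) + 1))
      injection e2 with e2
      have e3 := hlink a
      have e4 := hlink (a + (b + 1))
      rw [← e2] at e4
      exact iha (hν _ _ _ e3 e4)
  obtain ⟨x, y, hxy, he⟩ := Finite.exists_ne_map_eq_of_infinite (fun k => (seq k).1.1)
  rcases lt_or_gt_of_ne hxy with hlt | hlt
  · have e : y = x + (y - x - 1 + 1) := by omega
    exact key (y - x - 1) x (by rw [← e]; exact he)
  · have e : x = y + (x - y - 1 + 1) := by omega
    exact key (x - y - 1) y (by rw [← e]; exact he.symm)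



/-- The woman `w = w_1` is single in some marriage between `W` and `M` that is
stable with respect to the (possibly partial, duplicate-free) profiles `wL`, `mL`
if and only if the extra man `m'` is married in every marriage between
`W ∪ {w'}` and `M ∪ {m'}` that is stable with respect to the constructed
preference lists. -/
theorem single_iff_prime_always_married (n : ℕ) (hn : 0 < n)
    (wL : Fin n → List (Fin n)) (mL : Fin n → List (Fin n))
    (hw : ∀ i, (wL i).Nodup) (hm : ∀ j, (mL j).Nodup) :
    (∃ μ : Fin n → Option (Fin n),
        IsMarriage μ ∧ StableL wL mL μ ∧ μ ⟨0, hn⟩ = none) ↔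
      (∀ μ' : Fin (n + 1) → Option (Fin (n + 1)),
        IsMarriage μ' → StableL (addWL n wL) (addML n mL) μ' →
        ∃ i, μ' i = some (Fin.last n)) := by
  have hcs : Function.Injective (Fin.castSucc : Fin n → Fin (n + 1)) := Fin.castSucc_injective n
  set w0 : Fin n := ⟨0, hn⟩ with hw0v
  have hW0 : (Fin.castSucc w0) = (0 : Fin (n + 1)) := by
    apply Fin.ext
    simp [hw0v]
  have haddW : ∀ i : Fin n, addWL n wL i.castSucc =
      (if i.val = 0 then ((wL i).map Fin.castSucc) ++ [Fin.last n] else (wL i).map Fin.castSucc) := by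
    intro i
    simp [addWL, i.isLt, Fin.eta]
  have haddM : ∀ j : Fin n, addML n mL j.castSucc = (mL j).map Fin.castSucc := by
    intro j
    simp [addML, j.isLt, Fin.eta]
  have haddW_last : addWL n wL (Fin.last n) = [] := by simp [addWL]
  have haddM_last : addML n mL (Fin.last n) = [(0 : Fin (n + 1))] := by simp [addML]
  have hmem_map : ∀ (l : List (Fin n)) (a : Fin n),
      a.castSucc ∈ l.map Fin.castSucc ↔ a ∈ l := by
    intro l a
    simp [List.mem_map, Fin.castSucc_inj]
  have hlast_notmem : ∀ l : List (Fin n), Fin.last n ∉ l.map Fin.castSucc := by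
    intro l hmem
    rw [List.mem_map] at hmem
    obtain ⟨x, -, hx⟩ := hmem
    exact (Fin.castSucc_lt_last x).ne hx
  have hidx : ∀ (l : List (Fin n)) (a : Fin n),
      (l.map Fin.castSucc).idxOf a.castSucc = l.idxOf a := fun l a => indexOf_map_inj hcs l a
  have h0L : addWL n wL (0 : Fin (n + 1)) = ((wL w0).map Fin.castSucc) ++ [Fin.last n] := by
    rw [← hW0, haddW w0, if_pos (show w0.val = 0 from rfl)]
  have hdecW : ∀ (a : Fin n) (j' : Fin (n + 1)), j' ∈ addWL n wL a.castSucc → j' ≠ Fin.last n →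
      ∃ j1, j' = j1.castSucc ∧ j1 ∈ wL a := by
    intro a j' hmem hne
    rw [haddW a] at hmem
    by_cases h0 : a.val = 0
    · rw [if_pos h0] at hmem
      rcases List.mem_append.1 hmem with hh | hh
      · rw [List.mem_map] at hh
        obtain ⟨x, hx1, hx2⟩ := hh
        exact ⟨x, hx2.symm, hx1⟩
      · rw [List.mem_singleton] at hh
        exact absurd hh hne
    · rw [if_neg h0] at hmem
      rw [List.mem_map] at hmem
      obtain ⟨x, hx1, hx2⟩ := hmem
      exact ⟨x, hx2.symm, hx1⟩
  have hmemW' : ∀ (a b : Fin n), b ∈ wL a → b.castSucc ∈ addWL n wL a.castSucc := by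
    intro a b hb
    rw [haddW a]
    by_cases h0 : a.val = 0
    · rw [if_pos h0]
      exact List.mem_append_left _ ((hmem_map _ _).2 hb)
    · rw [if_neg h0]
      exact (hmem_map _ _).2 hb
  have liftW : ∀ (i a b : Fin n), listPref (wL i) a b →
      listPref (addWL n wL i.castSucc) a.castSucc b.castSucc := by
    intro i a b hp
    rw [haddW i]
    by_cases h0 : i.val = 0
    · rw [if_pos h0]
      refine ⟨List.mem_append_left _ ((hmem_map _ _).2 hp.1), fun hb => ?_⟩
      have hbmem : b.castSucc ∈ (wL i).map Fin.castSucc := by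
        rcases List.mem_append.1 hb with h | h
        · exact h
        · rw [List.mem_singleton] at h
          exact absurd h (Fin.castSucc_lt_last b).ne
      rw [List.idxOf_append_of_mem ((hmem_map _ _).2 hp.1), List.idxOf_append_of_mem hbmem,
        hidx, hidx]
      exact hp.2 ((hmem_map _ _).1 hbmem)
    · rw [if_neg h0]
      refine ⟨(hmem_map _ _).2 hp.1, fun hb => ?_⟩
      rw [hidx, hidx]
      exact hp.2 ((hmem_map _ _).1 hb)
  have liftM : ∀ (j a b : Fin n), listPref (mL j) a b →
      listPref (addML n mL j.castSucc) a.castSucc b.castSucc := by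
    intro j a b hp
    rw [haddM j]
    refine ⟨(hmem_map _ _).2 hp.1, fun hb => ?_⟩
    rw [hidx, hidx]
    exact hp.2 ((hmem_map _ _).1 hb)
  have hpref_last : ∀ b : Fin n, b ∈ wL w0 →
      listPref (addWL n wL (0 : Fin (n + 1))) b.castSucc (Fin.last n) := by
    intro b hb
    rw [h0L]
    refine ⟨List.mem_append_left _ ((hmem_map _ _).2 hb), fun _ => ?_⟩
    rw [List.idxOf_append_of_mem ((hmem_map _ _).2 hb),
      List.idxOf_append_of_notMem (hlast_notmem _), List.idxOf_cons_self]
    have := List.idxOf_lt_length_iff.2 ((hmem_map _ _).2 hb)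
    omega
  set d : Fin (n + 1) → Option (Fin n) :=
    fun j => if h : j.val < n then some ⟨j.val, h⟩ else none with hd
  have fbind : ∀ (o : Option (Fin (n + 1))) (j : Fin n),
      o.bind d = some j ↔ o = some j.castSucc := by
    intro o j
    cases o with
    | none => simp
    | some x =>
      show (if h : x.val < n then some (⟨x.val, h⟩ : Fin n) else none) = some j ↔
        some x = some j.castSucc
      by_cases hx : x.val < n
      · rw [dif_pos hx]
        constructor
        · intro h
          injection h with h
          subst h
          exact congrArg some (Fin.ext rfl).symm
        · intro h
          injection h with h
          subst h
          exact congrArg some (Fin.ext rfl)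
      · rw [dif_neg hx]
        constructor
        · intro h
          cases h
        · intro h
          injection h with h
          exfalso
          apply hx
          rw [h]
          simpa using j.isLt
  -- restriction of a stable extended marriage: first condition memberships
  have hrestr_mem : ∀ (a b : Fin n), b.castSucc ∈ addWL n wL a.castSucc → b ∈ wL a := by
    intro a b hA
    rw [haddW a] at hA
    by_cases h0 : a.val = 0
    · rw [if_pos h0] at hA
      rcases List.mem_append.1 hA with hh | hh
      · exact (hmem_map _ _).1 hh
      · rw [List.mem_singleton] at hh
        exact absurd hh (Fin.castSucc_lt_last b).ne
    · rw [if_neg h0] at hA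
      exact (hmem_map _ _).1 hA
  constructor
  · rintro ⟨μ, hμm, hμs, hμ0⟩ μ' hμ'm hμ's
    by_contra hno
    push_neg at hno
    have hman : ∀ i', μ' i' = some (Fin.last n) →
        listPref (addML n mL (Fin.last n)) (0 : Fin (n + 1)) i' :=
      fun i' h => absurd h (hno i')
    have h0memW : Fin.last n ∈ addWL n wL 0 := by
      rw [h0L]
      exact List.mem_append_right _ (List.mem_singleton_self _)
    have h0memM : (0 : Fin (n + 1)) ∈ addML n mL (Fin.last n) := by
      rw [haddM_last]
      exact List.mem_singleton_self _
    have hwfail : ¬ ∀ j', μ' 0 = some j' → listPref (addWL n wL 0) (Fin.last n) j' := by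
      intro hall
      exact hμ's.2 ⟨0, Fin.last n, h0memW, h0memM, hall, hman⟩
    push_neg at hwfail
    obtain ⟨jj, hjj, -⟩ := hwfail
    have hjjmem : jj ∈ addWL n wL 0 := (hμ's.1 0 jj hjj).1
    have hjne : jj ≠ Fin.last n := fun h => hno 0 (h ▸ hjj)
    obtain ⟨j0, rfl, hj0⟩ : ∃ j0 : Fin n, jj = j0.castSucc ∧ j0 ∈ wL w0 := by
      have : jj ∈ addWL n wL w0.castSucc := by rw [hW0]; exact hjjmem
      exact hdecW w0 jj this hjne
    set ν : Fin n → Option (Fin n) := fun i => (μ' i.castSucc).bind d with hνdef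
    have f1 : ∀ (i j : Fin n), ν i = some j ↔ μ' i.castSucc = some j.castSucc :=
      fun i j => fbind _ j
    have hνm : IsMarriage ν := by
      intro a a' j ha ha'
      exact hcs (hμ'm _ _ _ ((f1 a j).1 ha) ((f1 a' j).1 ha'))
    have hν0 : ν w0 = some j0 := (f1 w0 j0).2 (by rw [hW0]; exact hjj)
    have hνs : StableL wL mL ν := by
      constructor
      · intro a b h
        have h' := (f1 a b).1 h
        obtain ⟨hA, hB⟩ := hμ's.1 _ _ h'
        refine ⟨hrestr_mem a b hA, ?_⟩
        rw [haddM b] at hB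
        exact (hmem_map _ _).1 hB
      · rintro ⟨a, b, hbw, ham, hwc, hmc⟩
        apply hμ's.2
        refine ⟨a.castSucc, b.castSucc, hmemW' a b hbw, ?_, ?_, ?_⟩
        · rw [haddM b]
          exact (hmem_map _ _).2 ham
        · intro j' hj'
          have hj'ne : j' ≠ Fin.last n := fun he => hno _ (he ▸ hj')
          obtain ⟨j1, rfl, hj1⟩ := hdecW a j' (hμ's.1 _ _ hj').1 hj'ne
          exact liftW a b j1 (hwc j1 ((f1 a j1).2 hj'))
        · intro i' hi'
          rcases Fin.eq_castSucc_or_eq_last i' with ⟨i1, rfl⟩ | rfl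
          · exact liftM b a i1 (hmc i1 ((f1 i1 b).2 hi'))
          · have := (hμ's.1 _ _ hi').1
            rw [haddW_last] at this
            cases this
    have hlw := lone_wolf hw hm hμm hμs hνm hνs hμ0
    rw [hν0] at hlw
    cases hlw
  · intro hall
    have hw' : ∀ i', (addWL n wL i').Nodup := by
      intro i'
      rcases Fin.eq_castSucc_or_eq_last i' with ⟨i1, rfl⟩ | rfl
      · rw [haddW i1]
        by_cases h0 : i1.val = 0
        · rw [if_pos h0]
          refine List.nodup_append.2 ⟨(hw i1).map hcs, List.nodup_singleton _, ?_⟩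
          intro x hx hx'' hx'
          rw [List.mem_singleton] at hx'
          subst hx'
          exact fun h => hlast_notmem _ (h ▸ hx)
        · rw [if_neg h0]
          exact (hw i1).map hcs
      · rw [haddW_last]
        exact List.nodup_nil
    have hm' : ∀ j', (addML n mL j').Nodup := by
      intro j'
      rcases Fin.eq_castSucc_or_eq_last j' with ⟨j1, rfl⟩ | rfl
      · rw [haddM j1]
        exact (hm j1).map hcs
      · rw [haddM_last]
        exact List.nodup_singleton _
    obtain ⟨μ', hμ'm, hμ's⟩ := exists_stable _ _ hw' hm'
    obtain ⟨iw, hiw⟩ := hall μ' hμ'm hμ's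
    have hiw0 : iw = (0 : Fin (n + 1)) := by
      have := (hμ's.1 _ _ hiw).2
      rw [haddM_last, List.mem_singleton] at this
      exact this
    subst hiw0
    set ν : Fin n → Option (Fin n) :=
      fun i => if i = w0 then none else (μ' i.castSucc).bind d with hνdef
    have f1 : ∀ (i j : Fin n), ν i = some j ↔ (i ≠ w0 ∧ μ' i.castSucc = some j.castSucc) := by
      intro i j
      rw [hνdef]
      by_cases hi : i = w0
      · simp [hi]
      · simp only [if_neg hi]
        rw [fbind]
        exact ⟨fun h => ⟨hi, h⟩, fun h => h.2⟩
    have hνm : IsMarriage ν := by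
      intro a a' j ha ha'
      exact hcs (hμ'm _ _ _ ((f1 a j).1 ha).2 ((f1 a' j).1 ha').2)
    have hν0 : ν w0 = none := by
      rw [hνdef]
      simp
    have hνs : StableL wL mL ν := by
      constructor
      · intro a b h
        obtain ⟨-, h'⟩ := (f1 a b).1 h
        obtain ⟨hA, hB⟩ := hμ's.1 _ _ h'
        refine ⟨hrestr_mem a b hA, ?_⟩
        rw [haddM b] at hB
        exact (hmem_map _ _).1 hB
      · rintro ⟨a, b, hbw, ham, hwc, hmc⟩
        apply hμ's.2
        refine ⟨a.castSucc, b.castSucc, hmemW' a b hbw, ?_, ?_, ?_⟩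
        · rw [haddM b]
          exact (hmem_map _ _).2 ham
        · intro j' hj'
          by_cases ha0 : a = w0
          · subst ha0
            rw [hW0] at hj'
            have hj'l : j' = Fin.last n := by
              have := hiw.symm.trans hj'
              injection this with hh
              exact hh.symm
            subst hj'l
            rw [hW0]
            exact hpref_last b hbw
          · have hj'ne : j' ≠ Fin.last n := by
              intro he
              subst he
              have heq : a.castSucc = (0 : Fin (n + 1)) := hμ'm _ _ _ hj' hiw
              apply ha0
              apply hcs
              rw [heq, hW0]
            obtain ⟨j1, rfl, hj1⟩ := hdecW a j' (hμ's.1 _ _ hj').1 hj'ne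
            exact liftW a b j1 (hwc j1 ((f1 a j1).2 ⟨ha0, hj'⟩))
        · intro i' hi'
          rcases Fin.eq_castSucc_or_eq_last i' with ⟨i1, rfl⟩ | rfl
          · have hi1ne : i1 ≠ w0 := by
              intro he
              subst he
              rw [hW0] at hi'
              have := hiw.symm.trans hi'
              injection this with hh
              exact (Fin.castSucc_lt_last b).ne hh.symm
            exact liftM b a i1 (hmc i1 ((f1 i1 b).2 ⟨hi1ne, hi'⟩))
          · have := (hμ's.1 _ _ hi').1
            rw [haddW_last] at this
            cases this
    exact ⟨ν, hνm, hνs, hν0⟩
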